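/- arXiv:2409.02089 — 9 statements merged into one kernel-verified Lean document; each statement's English description precedes it below -/
import Mathlib

section
/- Let n be a positive integer, J an n×n complex positive semidefinite matrix, and σ ∈ ℝⁿ with σᵢ ≥ 0 for all i; let Σ = diag(σ). Then the matrix I + ΣJΣ is positive definite, its determinant is a real number satisfying det(I + ΣJΣ) ≤ ∏ᵢ₌₁ⁿ (1 + σᵢ² Jᵢᵢ), and the diagonal matrix D = diag(J₁₁, …, Jₙₙ) is positive semidefinite with Tr(D) = Tr(J) and det(I + ΣDΣ) = ∏ᵢ₌₁ⁿ (1 + σᵢ² Jᵢᵢ). Consequently, for every P > 0, the supremum of det(I + ΣJΣ) over positive semidefinite J with Tr(J) ≤ P equals the supremum over diagonal positive semidefinite J with Tr(J) ≤ P. -/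
open Matrix BigOperators ComplexOrder

attribute [-instance] instDecidableEqFin in
lemma hadamard' {m : ℕ} {M : Matrix (Fin m) (Fin m) ℂ} (hM : M.PosDef) :
    M.det.re ≤ ∏ i, (M i i).re := by
  haveI : WellFoundedLT (Fin m) := inferInstance
  haveI := LDL.invertibleLowerInv hM
  set L := LDL.lower hM with hLdef
  set d := LDL.diagEntries hM with hddef
  have hdiageq : LDL.diag hM = Matrix.diagonal d := by
    ext i j
    by_cases h : i = j
    · subst h; simp [LDL.diag, d]
    · simp [LDL.diag, h]
  have hDpd : (Matrix.diagonal d).PosDef := by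
    rw [← hdiageq, LDL.diag_eq_lowerInv_conj]
    refine PosDef.of_dotProduct_mulVec_pos (isHermitian_mul_mul_conjTranspose _ hM.isHermitian) fun x hx => ?_
    have h1 : (LDL.lowerInv hM)ᴴ *ᵥ x ≠ 0 := by
      intro h
      apply hx
      have hs : star x ᵥ* (LDL.lowerInv hM) = 0 := by
        have := congrArg star h
        rwa [star_mulVec, conjTranspose_conjTranspose, star_zero] at this
      have hinj := Matrix.vecMul_injective_of_invertible (LDL.lowerInv hM)
      have h0 : star x ᵥ* (LDL.lowerInv hM) = star (0 : Fin m → ℂ) ᵥ* (LDL.lowerInv hM) := by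
        simpa using hs
      simpa using hinj h0
    have h2 := hM.dotProduct_mulVec_pos h1
    simpa only [star_mulVec, dotProduct_mulVec, vecMul_vecMul, conjTranspose_conjTranspose,
      Matrix.mul_assoc] using h2
  have hdpos : ∀ i, 0 < d i := posDef_diagonal_iff.mp hDpd
  have hdre : ∀ i, d i = ((d i).re : ℂ) := by
    intro i
    have h := (hdpos i).le
    rw [Complex.le_def] at h
    exact Complex.ext rfl (by simpa using h.2.symm)
  have hdrepos : ∀ i, 0 < (d i).re := fun i => by
    have h := hdpos i; rw [Complex.lt_def] at h; simpa using h.1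
  have hfact : M = L * Matrix.diagonal d * Lᴴ := by
    rw [← hdiageq]; exact (LDL.lower_conj_diag hM).symm
  have hLtri : L.BlockTriangular OrderDual.toDual := by
    have h : (LDL.lowerInv hM).BlockTriangular OrderDual.toDual := fun i j h =>
      LDL.lowerInv_triangular hM h
    exact blockTriangular_inv_of_blockTriangular h
  have hdetL : L.det = ∏ i, L i i := det_of_lowerTriangular _ hLtri
  have hterm : ∀ i j, L i j * d j * star (L i j)
      = ((Complex.normSq (L i j) * (d j).re : ℝ) : ℂ) := by
    intro i j
    rw [mul_right_comm, Complex.star_def, Complex.mul_conj]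
    conv_lhs => rw [hdre j]
    rw [← Complex.ofReal_mul]
  have hMdiag : ∀ i, (M i i).re = ∑ j, Complex.normSq (L i j) * (d j).re := by
    intro i
    have h : M i i = ∑ j, L i j * d j * star (L i j) := by
      rw [hfact, Matrix.mul_apply]
      refine Finset.sum_congr rfl fun j _ => ?_
      rw [Matrix.mul_diagonal, Matrix.conjTranspose_apply]
    rw [h, Complex.re_sum]
    refine Finset.sum_congr rfl fun j _ => ?_
    rw [hterm i j, Complex.ofReal_re]
  have hdetM : M.det.re = ∏ i, Complex.normSq (L i i) * (d i).re := by
    have h : M.det = ((∏ i, Complex.normSq (L i i) * (d i).re : ℝ) : ℂ) := by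
      rw [hfact, det_mul, det_mul, hdetL, det_conjTranspose, hdetL, det_diagonal,
        Complex.ofReal_prod, star_prod, ← Finset.prod_mul_distrib, ← Finset.prod_mul_distrib]
      exact Finset.prod_congr rfl fun i _ => hterm i i
    rw [h, Complex.ofReal_re]
  rw [hdetM]
  refine Finset.prod_le_prod (fun i _ => mul_nonneg (Complex.normSq_nonneg _) (hdrepos i).le)
    (fun i _ => ?_)
  rw [hMdiag i]
  exact Finset.single_le_sum (f := fun j => Complex.normSq (L i j) * (d j).re)
    (fun j _ => mul_nonneg (Complex.normSq_nonneg _) (hdrepos j).le) (Finset.mem_univ i)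


lemma hadamard {m : ℕ} {M : Matrix (Fin m) (Fin m) ℂ} (hM : M.PosDef) :
    M.det.re ≤ ∏ i, (M i i).re := by
  have h := hadamard' hM
  have e : (@Matrix.det (Fin m) (fun a b => @LinearOrder.toDecidableEq (Fin m) (@Fin.instLinearOrder m) a b) _ ℂ _) M = M.det :=
    congrFun (congrArg (fun inst => @Matrix.det (Fin m) inst _ ℂ _) (Subsingleton.elim _ _)) M
  rwa [e] at h


/-- Hadamard-inequality reduction of the MIMO Shannon-capacity
objective `det (I + Σ J Σ)` to diagonal covariances. -/
theorem stmt_0 (n : ℕ) (hn : 0 < n)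
    (J : Matrix (Fin n) (Fin n) ℂ) (hJ : J.PosSemidef)
    (σ : Fin n → ℝ) (hσ : ∀ i, 0 ≤ σ i) :
    let S : Matrix (Fin n) (Fin n) ℂ := Matrix.diagonal (fun i => (σ i : ℂ))
    ((1 + S * J * S).PosDef)
    ∧ ((1 + S * J * S).det.im = 0)
    ∧ ((1 + S * J * S).det.re ≤ ∏ i, (1 + σ i ^ 2 * (J i i).re))
    ∧ (Matrix.diagonal (fun i => J i i)).PosSemidef
    ∧ (Matrix.diagonal (fun i => J i i)).trace = J.trace
    ∧ ((1 + S * Matrix.diagonal (fun i => J i i) * S).det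
        = ((∏ i, (1 + σ i ^ 2 * (J i i).re) : ℝ) : ℂ))
    ∧ ∀ P : ℝ, 0 < P →
        sSup {x : ℝ | ∃ K : Matrix (Fin n) (Fin n) ℂ, K.PosSemidef ∧
            K.trace.re ≤ P ∧ x = ((1 + S * K * S).det).re}
        = sSup {x : ℝ | ∃ d : Fin n → ℝ, (∀ i, 0 ≤ d i) ∧ (∑ i, d i) ≤ P ∧
            x = ((1 + S * (Matrix.diagonal (fun i => (d i : ℂ))) * S).det).re} := by
  intro S
  -- basic facts about S
  have hSH : Sᴴ = S := by
    show (Matrix.diagonal (fun i => (σ i : ℂ)))ᴴ = Matrix.diagonal (fun i => (σ i : ℂ))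
    rw [Matrix.diagonal_conjTranspose]
    refine congrArg Matrix.diagonal (funext fun i => ?_)
    exact Complex.conj_ofReal (σ i)
  -- positive definiteness of 1 + S K S for any PSD K
  have hpd : ∀ K : Matrix (Fin n) (Fin n) ℂ, K.PosSemidef → (1 + S * K * S).PosDef := by
    intro K hK
    have h1 : (S * K * Sᴴ).PosSemidef := hK.mul_mul_conjTranspose_same S
    rw [hSH] at h1
    exact Matrix.PosDef.add_posSemidef Matrix.PosDef.one h1
  -- diagonal entries of 1 + S K S
  have hentry : ∀ (K : Matrix (Fin n) (Fin n) ℂ) i, (1 + S * K * S) i i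
      = 1 + ((σ i ^ 2 : ℝ) : ℂ) * K i i := by
    intro K i
    show (1 + Matrix.diagonal (fun i => (σ i : ℂ)) * K * Matrix.diagonal (fun i => (σ i : ℂ))) i i
      = 1 + ((σ i ^ 2 : ℝ) : ℂ) * K i i
    rw [Matrix.add_apply, Matrix.one_apply_eq, Matrix.mul_diagonal, Matrix.diagonal_mul]
    push_cast
    ring
  have hentryre : ∀ (K : Matrix (Fin n) (Fin n) ℂ) i, ((1 + S * K * S) i i).re
      = 1 + σ i ^ 2 * (K i i).re := by
    intro K i
    rw [hentry K i, Complex.add_re, Complex.one_re, Complex.re_ofReal_mul]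
  -- hadamard bound for any PSD K
  have hhadK : ∀ K : Matrix (Fin n) (Fin n) ℂ, K.PosSemidef →
      (1 + S * K * S).det.re ≤ ∏ i, (1 + σ i ^ 2 * (K i i).re) := by
    intro K hK
    have h := hadamard (hpd K hK)
    calc (1 + S * K * S).det.re ≤ ∏ i, ((1 + S * K * S) i i).re := h
      _ = ∏ i, (1 + σ i ^ 2 * (K i i).re) := Finset.prod_congr rfl fun i _ => hentryre K i
  -- determinant formula in the diagonal case
  have hdiagdet : ∀ e : Fin n → ℝ, (1 + S * Matrix.diagonal (fun i => (e i : ℂ)) * S).det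
      = ((∏ i, (1 + σ i ^ 2 * e i) : ℝ) : ℂ) := by
    intro e
    have h1 : S * Matrix.diagonal (fun i => (e i : ℂ)) * S
        = Matrix.diagonal (fun i => ((σ i ^ 2 * e i : ℝ) : ℂ)) := by
      simp only [S, diagonal_mul_diagonal]
      congr 1
      funext i
      push_cast
      ring
    have h2 : (1 : Matrix (Fin n) (Fin n) ℂ) = Matrix.diagonal (fun _ => (1 : ℂ)) := by
      simp [Matrix.diagonal_one]
    rw [h1, h2, Matrix.diagonal_add, Matrix.det_diagonal, Complex.ofReal_prod]
    refine Finset.prod_congr rfl fun i _ => ?_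
    push_cast
    ring
  -- diagonal entries of PSD matrices
  have hdiagnn : ∀ (K : Matrix (Fin n) (Fin n) ℂ), K.PosSemidef → ∀ i, 0 ≤ K i i := by
    intro K hK i
    have h := hK.dotProduct_mulVec_nonneg (Pi.single i 1)
    simpa [dotProduct, Matrix.mulVec, Pi.single_apply, Finset.sum_ite_eq] using h
  have hdiagre : ∀ (K : Matrix (Fin n) (Fin n) ℂ), K.PosSemidef →
      ∀ i, K i i = (((K i i).re : ℝ) : ℂ) := by
    intro K hK i
    exact (hK.isHermitian.coe_re_apply_self i).symm
  have hdiagrenn : ∀ (K : Matrix (Fin n) (Fin n) ℂ), K.PosSemidef → ∀ i, 0 ≤ (K i i).re := by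
    intro K hK i
    have h := hdiagnn K hK i
    rw [Complex.le_def] at h
    simpa using h.1
  refine ⟨hpd J hJ, ?_, ?_, ?_, ?_, ?_, ?_⟩
  · have h := (hpd J hJ).det_pos
    rw [Complex.lt_def] at h
    simpa using h.2.symm
  · exact hhadK J hJ
  · exact Matrix.PosSemidef.diagonal (fun i => hdiagnn J hJ i)
  · simp [Matrix.trace, Matrix.diag]
  · have h : Matrix.diagonal (fun i => J i i)
        = Matrix.diagonal (fun i => (((J i i).re : ℝ) : ℂ)) := by
      exact congrArg Matrix.diagonal (funext fun i => hdiagre J hJ i)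
    rw [h, hdiagdet (fun i => (J i i).re)]
  · intro P hP
    set B : ℝ := ∏ i, (1 + σ i ^ 2 * P) with hB
    set T1 : Set ℝ := {x : ℝ | ∃ K : Matrix (Fin n) (Fin n) ℂ, K.PosSemidef ∧
        K.trace.re ≤ P ∧ x = ((1 + S * K * S).det).re} with hT1
    set T2 : Set ℝ := {x : ℝ | ∃ d : Fin n → ℝ, (∀ i, 0 ≤ d i) ∧ (∑ i, d i) ≤ P ∧
        x = ((1 + S * (Matrix.diagonal (fun i => (d i : ℂ))) * S).det).re} with hT2
    have hT2val : ∀ (e : Fin n → ℝ),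
        ((1 + S * (Matrix.diagonal (fun i => (e i : ℂ))) * S).det).re
          = ∏ i, (1 + σ i ^ 2 * e i) := by
      intro e
      rw [hdiagdet e, Complex.ofReal_re]
    have htrre : ∀ K : Matrix (Fin n) (Fin n) ℂ, K.trace.re = ∑ i, (K i i).re := by
      intro K
      simp [Matrix.trace, Matrix.diag, Complex.re_sum]
    have hbound2 : ∀ y ∈ T2, y ≤ B := by
      rintro y ⟨e, he0, hesum, rfl⟩
      rw [hT2val e]
      refine Finset.prod_le_prod (fun i _ => by have := he0 i; positivity) (fun i _ => ?_)
      have hei : e i ≤ P := le_trans (Finset.single_le_sum (fun j _ => he0 j)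
        (Finset.mem_univ i)) hesum
      have : σ i ^ 2 * e i ≤ σ i ^ 2 * P := by nlinarith [sq_nonneg (σ i)]
      linarith
    have hb2 : BddAbove T2 := ⟨B, hbound2⟩
    have hsub : T2 ⊆ T1 := by
      rintro x ⟨e, he0, hesum, rfl⟩
      refine ⟨Matrix.diagonal (fun i => (e i : ℂ)), ?_, ?_, rfl⟩
      · exact Matrix.PosSemidef.diagonal (fun i => by
          simpa using Complex.zero_le_real.mpr (he0 i))
      · rw [htrre]
        simpa [Matrix.diagonal_apply_eq] using hesum
    have hmap : ∀ x ∈ T1, ∃ y ∈ T2, x ≤ y := by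
      rintro x ⟨K, hK, htr, rfl⟩
      refine ⟨∏ i, (1 + σ i ^ 2 * (K i i).re), ⟨fun i => (K i i).re, hdiagrenn K hK, ?_, ?_⟩,
        hhadK K hK⟩
      · rw [← htrre]; exact htr
      · rw [hT2val]
    have hne1 : T1.Nonempty := by
      refine ⟨((1 + S * 0 * S).det).re, 0, Matrix.PosSemidef.zero, by simpa using hP.le, rfl⟩
    have hne2 : T2.Nonempty := by
      refine ⟨_, fun _ => 0, fun _ => le_refl 0, by simpa using hP.le, rfl⟩
    apply le_antisymm
    · refine csSup_le hne1 (fun x hx => ?_)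
      obtain ⟨y, hy, hxy⟩ := hmap x hx
      exact hxy.trans (le_csSup hb2 hy)
    · refine csSup_le_csSup ⟨B, fun x hx => ?_⟩ hne2 hsub
      obtain ⟨y, hy, hxy⟩ := hmap x hx
      exact hxy.trans (hbound2 y hy)
end

section
/- Let A be an n×n Hermitian complex matrix that is indefinite in the sense that there exists a vector v with v†Av < 0, let H be a nonzero m×n complex matrix, and let P > 0. Then the optimization problem sup { log det(I + H J H†) : J positive semidefinite, Tr(AJ) ≤ P } is unbounded: for every M ∈ ℝ there exists an n×n positive semidefinite matrix J with Tr(AJ) ≤ P and log det(I + H J H†) > M. -/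
open Matrix BigOperators ComplexOrder

private lemma aux_trace_eq_sum {k : ℕ} (B : Matrix (Fin k) (Fin k) ℂ) (hB : B.IsHermitian) :
    B.trace = ∑ i, (hB.eigenvalues i : ℂ) := by
  conv_lhs => rw [hB.spectral_theorem, Unitary.conjStarAlgAut_apply]
  rw [Matrix.trace_mul_cycle]
  rw [(Matrix.mem_unitaryGroup_iff').mp (hB.eigenvectorUnitary).2, one_mul, Matrix.trace_diagonal]
  simp

private lemma aux_det_one_add {k : ℕ} (B : Matrix (Fin k) (Fin k) ℂ) (hB : B.IsHermitian) :
    (1 + B).det = ∏ i, (1 + (hB.eigenvalues i : ℂ)) := by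
  have hU : (hB.eigenvectorUnitary : Matrix (Fin k) (Fin k) ℂ) *
      star (hB.eigenvectorUnitary : Matrix (Fin k) (Fin k) ℂ) = 1 :=
    (Matrix.mem_unitaryGroup_iff).mp (hB.eigenvectorUnitary).2
  have h1 : (1 + B) = (hB.eigenvectorUnitary : Matrix (Fin k) (Fin k) ℂ) *
      (1 + diagonal (RCLike.ofReal ∘ hB.eigenvalues)) *
      star (hB.eigenvectorUnitary : Matrix (Fin k) (Fin k) ℂ) := by
    rw [mul_add, add_mul, mul_one, hU]
    congr 1
    exact hB.spectral_theorem.trans (Unitary.conjStarAlgAut_apply _ _)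
  rw [h1, det_mul_right_comm, hU, one_mul]
  rw [show (1 : Matrix (Fin k) (Fin k) ℂ) + diagonal (RCLike.ofReal ∘ hB.eigenvalues)
      = diagonal (fun i => 1 + (hB.eigenvalues i : ℂ)) by
    rw [← diagonal_one, ← diagonal_add]; rfl]
  simp [det_diagonal]

private lemma aux_prod_ge {k : ℕ} (f : Fin k → ℝ) (h : ∀ i, 0 ≤ f i) :
    1 + ∑ i, f i ≤ ∏ i, (1 + f i) := by
  have : ∀ s : Finset (Fin k), 1 + ∑ i ∈ s, f i ≤ ∏ i ∈ s, (1 + f i) := by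
    intro s
    induction s using Finset.cons_induction with
    | empty => simp
    | cons a s ha ih =>
      simp only [Finset.sum_cons, Finset.prod_cons]
      have h1 : 0 ≤ f a := h a
      have h4 : 0 ≤ ∑ i ∈ s, f i := Finset.sum_nonneg fun i _ => h i
      nlinarith
  exact this Finset.univ

private lemma aux_det_bound {k : ℕ} (B : Matrix (Fin k) (Fin k) ℂ) (hB : B.PosSemidef) :
    1 + B.trace.re ≤ ((1 + B).det).re := by
  have hH := hB.1
  rw [aux_det_one_add B hH, aux_trace_eq_sum B hH]
  have e1 : (∏ i, (1 + (hH.eigenvalues i : ℂ))) = ((∏ i, (1 + hH.eigenvalues i) : ℝ) : ℂ) := by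
    push_cast; rfl
  have e2 : (∑ i, (hH.eigenvalues i : ℂ)) = ((∑ i, hH.eigenvalues i : ℝ) : ℂ) := by
    push_cast; rfl
  rw [e1, e2, Complex.ofReal_re, Complex.ofReal_re]
  exact aux_prod_ge _ fun i => hB.eigenvalues_nonneg i

private lemma aux_psd_vecMulVec {k : ℕ} (x : Fin k → ℂ) : (vecMulVec x (star x)).PosSemidef := by
  have : vecMulVec x (star x) = (replicateCol (Fin 1) x) * (replicateCol (Fin 1) x)ᴴ := by
    rw [conjTranspose_replicateCol]; exact vecMulVec_eq (Fin 1) x (star x)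
  rw [this]
  exact posSemidef_self_mul_conjTranspose _

private lemma aux_psd_smul {k : ℕ} {X : Matrix (Fin k) (Fin k) ℂ} (hX : X.PosSemidef) {r : ℝ}
    (hr : 0 ≤ r) : ((r : ℂ) • X).PosSemidef := by
  refine .of_dotProduct_mulVec_nonneg ?_ ?_
  · simp [Matrix.IsHermitian, conjTranspose_smul, hX.1.eq, Complex.conj_ofReal]
  · intro y
    rw [smul_mulVec, dotProduct_smul, smul_eq_mul]
    exact mul_nonneg (by exact_mod_cast hr) (hX.dotProduct_mulVec_nonneg y)

private lemma aux_trace_mul_vecMulVec {k : ℕ} (Mx : Matrix (Fin k) (Fin k) ℂ) (x : Fin k → ℂ) :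
    (Mx * vecMulVec x (star x)).trace = star x ⬝ᵥ Mx *ᵥ x := by
  simp only [Matrix.trace, Matrix.diag, Matrix.mul_apply, vecMulVec_apply, dotProduct, mulVec,
    Pi.star_apply, Finset.mul_sum, Finset.sum_mul]
  apply Finset.sum_congr rfl; intro i _
  apply Finset.sum_congr rfl; intro j _
  ring

private lemma aux_re_dot {k : ℕ} (w : Fin k → ℂ) :
    (star w ⬝ᵥ w).re = ∑ i, Complex.normSq (w i) := by
  simp [dotProduct, Complex.re_sum, Complex.normSq_apply, Complex.mul_re]

/-- If the Hermitian constraint matrix `A` is indefinite (some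
`v` has `v† A v < 0`) and `H ≠ 0`, then `sup { log det (I + H J Hᴴ) : J ⪰ 0,
Tr (A J) ≤ P }` is unbounded above. -/
theorem stmt_4 (n m : ℕ) (A : Matrix (Fin n) (Fin n) ℂ) (hA : A.IsHermitian)
    (v : Fin n → ℂ) (hv : (star v ⬝ᵥ A *ᵥ v).re < 0)
    (H : Matrix (Fin m) (Fin n) ℂ) (hH : H ≠ 0) (P : ℝ) (hP : 0 < P) :
    ∀ M : ℝ, ∃ J : Matrix (Fin n) (Fin n) ℂ, J.PosSemidef ∧
      ((A * J).trace).re ≤ P ∧ M < Real.log ((1 + H * J * Hᴴ).det.re) := by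
  intro M
  -- find a nonzero column of H
  have hex : ∃ i j, H i j ≠ 0 := by
    by_contra hc
    push_neg at hc
    exact hH (Matrix.ext fun i j => hc i j)
  obtain ⟨i0, j0, hij⟩ := hex
  set h : Fin n → ℂ := Pi.single j0 1 with hh
  clear_value h
  set w : Fin m → ℂ := H *ᵥ h with hw
  clear_value w
  have hwi0 : w i0 = H i0 j0 := by
    simp [hw, hh, mulVec_single]
  set c : ℝ := (star w ⬝ᵥ w).re with hc
  clear_value c
  have hcpos : 0 < c := by
    rw [hc, aux_re_dot]
    have h1 : Complex.normSq (w i0) ≤ ∑ i, Complex.normSq (w i) :=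
      Finset.single_le_sum (fun i _ => Complex.normSq_nonneg _) (Finset.mem_univ i0)
    have h2 : 0 < Complex.normSq (w i0) := by
      rw [hwi0]; exact Complex.normSq_pos.mpr hij
    linarith
  set a : ℝ := (star h ⬝ᵥ A *ᵥ h).re with ha
  clear_value a
  set b : ℝ := (star v ⬝ᵥ A *ᵥ v).re with hb
  clear_value b
  have hbneg : b < 0 := hv
  set β₂ : ℝ := max 0 (a / (-b)) with hβ₂
  clear_value β₂
  have hβ₂0 : 0 ≤ β₂ := by rw [hβ₂]; exact le_max_left _ _
  have hkey : a + β₂ * b ≤ 0 := by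
    have hd : a / (-b) ≤ β₂ := by rw [hβ₂]; exact le_max_right _ _
    have hne : (-b) ≠ 0 := ne_of_gt (neg_pos.mpr hbneg)
    have hdm : (a / (-b)) * (-b) = a := div_mul_cancel₀ a hne
    nlinarith
  set β₁ : ℝ := max 0 (Real.exp M / c) + 1 with hβ₁
  clear_value β₁
  have hβ₁0 : 0 ≤ β₁ := by rw [hβ₁]; positivity
  have hβ₁c : Real.exp M < β₁ * c := by
    have h1 : Real.exp M / c ≤ max 0 (Real.exp M / c) := le_max_right _ _
    have h2 : (Real.exp M / c) * c = Real.exp M := div_mul_cancel₀ _ (ne_of_gt hcpos)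
    have h3 : Real.exp M / c + 1 ≤ β₁ := by rw [hβ₁]; linarith
    have h4 := mul_le_mul_of_nonneg_right h3 (le_of_lt hcpos)
    have h5 : (Real.exp M / c + 1) * c = Real.exp M + c := by rw [add_mul, h2, one_mul]
    linarith
  set X : Matrix (Fin n) (Fin n) ℂ := vecMulVec h (star h) with hX
  set Y : Matrix (Fin n) (Fin n) ℂ := vecMulVec v (star v) with hY
  set J : Matrix (Fin n) (Fin n) ℂ := (β₁ : ℂ) • (X + (β₂ : ℂ) • Y) with hJdef
  clear_value J
  have hJpsd : J.PosSemidef := by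
    rw [hJdef, hX, hY]
    exact aux_psd_smul ((aux_psd_vecMulVec h).add (aux_psd_smul (aux_psd_vecMulVec v) hβ₂0)) hβ₁0
  -- trace formula for any matrix times J
  have htr : ∀ N : Matrix (Fin n) (Fin n) ℂ,
      ((N * J).trace).re = β₁ * ((star h ⬝ᵥ N *ᵥ h).re + β₂ * (star v ⬝ᵥ N *ᵥ v).re) := by
    intro N
    have : N * J = (β₁ : ℂ) • (N * X + (β₂ : ℂ) • (N * Y)) := by
      rw [hJdef, mul_smul_comm, mul_add, mul_smul_comm]
    rw [this, trace_smul, trace_add, trace_smul, hX, hY,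
      aux_trace_mul_vecMulVec, aux_trace_mul_vecMulVec]
    simp only [smul_eq_mul, Complex.re_ofReal_mul, Complex.add_re]
  refine ⟨J, hJpsd, ?_, ?_⟩
  · -- trace constraint
    rw [htr A, ← ha, ← hb]
    have : β₁ * (a + β₂ * b) ≤ 0 := mul_nonpos_of_nonneg_of_nonpos hβ₁0 hkey
    nlinarith
  · -- determinant bound
    have hBpsd : (H * J * Hᴴ).PosSemidef := hJpsd.mul_mul_conjTranspose_same H
    have hdet := aux_det_bound _ hBpsd
    have htrB : ((H * J * Hᴴ).trace).re
        = β₁ * ((star h ⬝ᵥ (Hᴴ * H) *ᵥ h).re + β₂ * (star v ⬝ᵥ (Hᴴ * H) *ᵥ v).re) := by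
      rw [Matrix.trace_mul_cycle]
      exact htr (Hᴴ * H)
    have hdot : ∀ x : Fin n → ℂ,
        star x ⬝ᵥ (Hᴴ * H) *ᵥ x = star (H *ᵥ x) ⬝ᵥ (H *ᵥ x) := by
      intro x
      rw [← mulVec_mulVec, dotProduct_mulVec, ← star_mulVec]
    have htu : 0 ≤ (star (H *ᵥ v) ⬝ᵥ (H *ᵥ v)).re := by
      rw [aux_re_dot]
      exact Finset.sum_nonneg fun i _ => Complex.normSq_nonneg _
    have htrB' : ((H * J * Hᴴ).trace).re
        = β₁ * (c + β₂ * (star (H *ᵥ v) ⬝ᵥ (H *ᵥ v)).re) := by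
      rw [htrB, hdot h, hdot v, ← hw, ← hc]
    have hge : Real.exp M < 1 + ((H * J * Hᴴ).trace).re := by
      rw [htrB']
      nlinarith [mul_nonneg hβ₁0 (mul_nonneg hβ₂0 htu)]
    have hpos : 0 < (1 + H * J * Hᴴ).det.re := by
      have := Real.exp_pos M
      linarith
    rw [Real.lt_log_iff_exp_lt hpos]
    linarith
end

section
/- (Equal supports at the optimum.) Let n ≥ 1 be an integer and γ > 0. If (x*, y*) ∈ Δₙ × Δₙ is a global maximizer of f(x,y) = Σᵢ₌₁ⁿ log(1 + γ xᵢ yᵢ) over Δₙ × Δₙ, then the support sets of x* and y* coincide: for every index i, xᵢ* > 0 if and only if yᵢ* > 0. -/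
open BigOperators

lemma stmt8_aux (n : ℕ) (γ : ℝ) (hγ : 0 < γ)
    (x y : Fin n → ℝ)
    (hx0 : ∀ i, 0 ≤ x i) (hx1 : ∑ i, x i = 1)
    (hy0 : ∀ i, 0 ≤ y i) (hy1 : ∑ i, y i = 1)
    (hmax : ∀ u v : Fin n → ℝ, (∀ i, 0 ≤ u i) → (∑ i, u i = 1) →
      (∀ i, 0 ≤ v i) → (∑ i, v i = 1) →
      ∑ i, Real.log (1 + γ * u i * v i) ≤ ∑ i, Real.log (1 + γ * x i * y i))
    (i : Fin n) (hxi : 0 < x i) (hyi : y i = 0) : False := by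
  -- find an index j where y j > 0
  obtain ⟨j, hyj⟩ : ∃ j, 0 < y j := by
    by_contra h
    push_neg at h
    have : ∑ k, y k = 0 :=
      Finset.sum_eq_zero fun k _ => le_antisymm (h k) (hy0 k)
    linarith
  have hji : j ≠ i := fun h => by rw [h, hyi] at hyj; exact lt_irrefl 0 hyj
  -- move the mass x i onto index j
  set u : Fin n → ℝ := fun k => if k = i then 0 else if k = j then x j + x i else x k with hu
  have hu0 : ∀ k, 0 ≤ u k := by
    intro k
    simp only [hu]
    split_ifs with h1 h2
    · exact le_refl 0
    · exact add_nonneg (hx0 j) (hx0 i)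
    · exact hx0 k
  have hukey : ∀ k, u k = x k + ((if k = i then -x i else 0) + (if k = j then x i else 0)) := by
    intro k
    by_cases h1 : k = i
    · subst h1
      simp [hu, Ne.symm hji]
    · by_cases h2 : k = j
      · subst h2
        simp [hu, h1]
      · simp [hu, h1, h2]
  have hu1 : ∑ k, u k = 1 := by
    rw [Finset.sum_congr rfl fun k _ => hukey k, Finset.sum_add_distrib,
      Finset.sum_add_distrib, hx1, Finset.sum_ite_eq' Finset.univ i fun _ => -x i,
      Finset.sum_ite_eq' Finset.univ j fun _ => x i]
    simp
  have huj : u j = x j + x i := by simp [hu, hji]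
  have hpos : ∀ k, (0:ℝ) < 1 + γ * x k * y k := fun k => by
    nlinarith [mul_nonneg (mul_nonneg hγ.le (hx0 k)) (hy0 k)]
  -- the objective strictly increases
  have hlt : ∑ k, Real.log (1 + γ * x k * y k) < ∑ k, Real.log (1 + γ * u k * y k) := by
    apply Finset.sum_lt_sum
    · intro k _
      by_cases h1 : k = i
      · subst h1
        rw [hyi]
        simp
      · by_cases h2 : k = j
        · rw [h2, huj]
          apply Real.log_le_log (hpos j)
          nlinarith [mul_nonneg (mul_nonneg hγ.le hxi.le) hyj.le]
        · have : u k = x k := by simp [hu, h1, h2]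
          rw [this]
    · refine ⟨j, Finset.mem_univ j, ?_⟩
      rw [huj]
      apply Real.log_lt_log (hpos j)
      nlinarith [mul_pos (mul_pos hγ hxi) hyj]
  exact absurd (hmax u y hu0 hu1 hy0 hy1) (not_le.mpr hlt)

/-- Equal supports at the optimum of the generalized
water-filling problem: at a global maximizer `(x, y)` of
`Σ log (1 + γ xᵢ yᵢ)` over the product of probability simplices,
`xᵢ > 0 ↔ yᵢ > 0`. -/
theorem stmt_8 (n : ℕ) (hn : 1 ≤ n) (γ : ℝ) (hγ : 0 < γ)
    (x y : Fin n → ℝ)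
    (hx0 : ∀ i, 0 ≤ x i) (hx1 : ∑ i, x i = 1)
    (hy0 : ∀ i, 0 ≤ y i) (hy1 : ∑ i, y i = 1)
    (hmax : ∀ u v : Fin n → ℝ, (∀ i, 0 ≤ u i) → (∑ i, u i = 1) →
      (∀ i, 0 ≤ v i) → (∑ i, v i = 1) →
      ∑ i, Real.log (1 + γ * u i * v i) ≤ ∑ i, Real.log (1 + γ * x i * y i)) :
    ∀ i, 0 < x i ↔ 0 < y i := by
  have hmax' : ∀ u v : Fin n → ℝ, (∀ i, 0 ≤ u i) → (∑ i, u i = 1) →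
      (∀ i, 0 ≤ v i) → (∑ i, v i = 1) →
      ∑ i, Real.log (1 + γ * u i * v i) ≤ ∑ i, Real.log (1 + γ * y i * x i) := by
    intro u v hu hu1 hv hv1
    have := hmax v u hv hv1 hu hu1
    calc ∑ i, Real.log (1 + γ * u i * v i)
        = ∑ i, Real.log (1 + γ * v i * u i) := by
          apply Finset.sum_congr rfl; intro k _; ring_nf
      _ ≤ ∑ i, Real.log (1 + γ * x i * y i) := this
      _ = ∑ i, Real.log (1 + γ * y i * x i) := by
          apply Finset.sum_congr rfl; intro k _; ring_nf
  intro i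
  constructor
  · intro hxi
    by_contra h
    have hyi : y i = 0 := le_antisymm (not_lt.mp h) (hy0 i)
    exact stmt8_aux n γ hγ x y hx0 hx1 hy0 hy1 hmax i hxi hyi
  · intro hyi
    by_contra h
    have hxi : x i = 0 := le_antisymm (not_lt.mp h) (hx0 i)
    exact stmt8_aux n γ hγ y x hy0 hy1 hx0 hx1 hmax' i hyi hxi
end

section
/- (Pairwise optimality conditions.) Let n ≥ 1 be an integer and γ > 0, and let (x*, y*) ∈ Δₙ × Δₙ be a global maximizer of f(x,y) = Σᵢ₌₁ⁿ log(1 + γ xᵢ yᵢ) over Δₙ × Δₙ. Then for every pair of indices i ≠ j with xᵢ*, xⱼ*, yᵢ*, yⱼ* all positive, at least one of the following holds: (1) γ² xᵢ* yᵢ* xⱼ* yⱼ* = 1, or (2) xᵢ* = xⱼ*. -/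
open BigOperators

/-- If `c*t ≤ d*t^2` for all `|t| ≤ ε` with `ε > 0`, `d ≥ 0`, then `c = 0`. -/
lemma aux_zero {ε c d : ℝ} (hε : 0 < ε) (hd : 0 ≤ d)
    (h : ∀ t : ℝ, |t| ≤ ε → c * t ≤ d * t ^ 2) : c = 0 := by
  rcases lt_trichotomy c 0 with hc | hc | hc
  · exfalso
    set t := min ε (-c / (2 * d + 1)) with ht
    have ht0 : 0 < t := lt_min hε (div_pos (by linarith) (by positivity))
    have h1 := h (-t) (by rw [abs_neg, abs_of_pos ht0]; exact min_le_left _ _)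
    have h2 : t ≤ -c / (2 * d + 1) := min_le_right _ _
    have h3 : t * (2 * d + 1) ≤ -c := by
      rw [le_div_iff₀ (by positivity)] at h2
      linarith [h2]
    nlinarith [mul_pos ht0 ht0]
  · exact hc
  · exfalso
    set t := min ε (c / (2 * d + 1)) with ht
    have ht0 : 0 < t := lt_min hε (div_pos (by linarith) (by positivity))
    have h1 := h t (by rw [abs_of_pos ht0]; exact min_le_left _ _)
    have h2 : t ≤ c / (2 * d + 1) := min_le_right _ _
    have h3 : t * (2 * d + 1) ≤ c := by
      rw [le_div_iff₀ (by positivity)] at h2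
      linarith [h2]
    nlinarith [mul_pos ht0 ht0]

/-- Stationarity in the `x` variable along the direction `e_i - e_j`. -/
lemma kkt_dir (n : ℕ) (γ : ℝ) (hγ : 0 < γ) (x y : Fin n → ℝ)
    (hx0 : ∀ i, 0 ≤ x i) (hx1 : ∑ i, x i = 1) (hy0 : ∀ i, 0 ≤ y i)
    (hmax : ∀ u : Fin n → ℝ, (∀ i, 0 ≤ u i) → (∑ i, u i = 1) →
      ∑ i, Real.log (1 + γ * u i * y i) ≤ ∑ i, Real.log (1 + γ * x i * y i))
    (i j : Fin n) (hij : i ≠ j) (hxi : 0 < x i) (hxj : 0 < x j) :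
    y i * (1 + γ * x j * y j) = y j * (1 + γ * x i * y i) := by
  set A := 1 + γ * x i * y i with hA
  set B := 1 + γ * x j * y j with hB
  have hApos : 0 < A := by have := mul_nonneg (mul_nonneg hγ.le (hx0 i)) (hy0 i); simp [hA]; linarith
  have hBpos : 0 < B := by have := mul_nonneg (mul_nonneg hγ.le (hx0 j)) (hy0 j); simp [hB]; linarith
  have hsplit : ∀ f : Fin n → ℝ,
      ∑ k, f k = f i + f j + ∑ k ∈ (Finset.univ.erase i).erase j, f k := by
    intro f
    rw [← Finset.add_sum_erase _ f (Finset.mem_univ i),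
      ← Finset.add_sum_erase _ f (Finset.mem_erase.mpr ⟨Ne.symm hij, Finset.mem_univ j⟩)]
    ring
  have key : γ * (y i * B - y j * A) = 0 := by
    apply aux_zero (ε := min (x i) (x j)) (d := γ ^ 2 * (y i * y j))
      (lt_min hxi hxj) (mul_nonneg (by positivity) (mul_nonneg (hy0 i) (hy0 j)))
    intro t htt
    have hti : -x i ≤ t := by
      have := (abs_le.mp htt).1; have := min_le_left (x i) (x j); linarith
    have htj : t ≤ x j := le_trans (abs_le.mp htt).2 (min_le_right _ _)
    set u : Fin n → ℝ := fun k => if k = i then x i + t else if k = j then x j - t else x k with hu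
    have hui : u i = x i + t := by simp [hu]
    have huj : u j = x j - t := by simp [hu, Ne.symm hij]
    have hurest : ∀ k ∈ (Finset.univ.erase i).erase j, u k = x k := by
      intro k hk
      simp only [Finset.mem_erase] at hk
      simp [hu, hk.1, hk.2.1]
    have hu0 : ∀ k, 0 ≤ u k := by
      intro k
      by_cases h1 : k = i
      · subst h1; rw [hui]; linarith
      by_cases h2 : k = j
      · subst h2; rw [huj]; linarith
      · simp [hu, h1, h2]; exact hx0 k
    have hu1 : ∑ k, u k = 1 := by
      rw [hsplit u, hui, huj, Finset.sum_congr rfl hurest]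
      rw [hsplit x] at hx1
      linarith
    have hlog := hmax u hu0 hu1
    rw [hsplit (fun k => Real.log (1 + γ * u k * y k)),
      hsplit (fun k => Real.log (1 + γ * x k * y k))] at hlog
    have htail : ∑ k ∈ (Finset.univ.erase i).erase j, Real.log (1 + γ * u k * y k)
        = ∑ k ∈ (Finset.univ.erase i).erase j, Real.log (1 + γ * x k * y k) := by
      exact Finset.sum_congr rfl fun k hk => by rw [hurest k hk]
    rw [htail, hui, huj] at hlog
    have hapos : (0:ℝ) < 1 + γ * (x i + t) * y i := by
      have := mul_nonneg (mul_nonneg hγ.le (by linarith : (0:ℝ) ≤ x i + t)) (hy0 i); linarith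
    have hbpos : (0:ℝ) < 1 + γ * (x j - t) * y j := by
      have := mul_nonneg (mul_nonneg hγ.le (by linarith : (0:ℝ) ≤ x j - t)) (hy0 j); linarith
    have hlog2 : Real.log (1 + γ * (x i + t) * y i) + Real.log (1 + γ * (x j - t) * y j)
        ≤ Real.log A + Real.log B := by linarith
    rw [← Real.log_mul hapos.ne' hbpos.ne', ← Real.log_mul hApos.ne' hBpos.ne'] at hlog2
    have hmul : (1 + γ * (x i + t) * y i) * (1 + γ * (x j - t) * y j) ≤ A * B :=
      (Real.log_le_log_iff (by positivity) (by positivity)).mp hlog2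
    nlinarith [hmul]
  have : y i * B - y j * A = 0 := by
    rcases mul_eq_zero.mp key with h | h
    · exact absurd h hγ.ne'
    · exact h
  linarith

/-- Pairwise KKT optimality conditions at a global maximizer of
`Σ log (1 + γ xᵢ yᵢ)` over the product of probability simplices: for `i ≠ j`
with all four entries positive, either `γ² xᵢ yᵢ xⱼ yⱼ = 1` or `xᵢ = xⱼ`. -/
theorem stmt_9 (n : ℕ) (hn : 1 ≤ n) (γ : ℝ) (hγ : 0 < γ)
    (x y : Fin n → ℝ)
    (hx0 : ∀ i, 0 ≤ x i) (hx1 : ∑ i, x i = 1)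
    (hy0 : ∀ i, 0 ≤ y i) (hy1 : ∑ i, y i = 1)
    (hmax : ∀ u v : Fin n → ℝ, (∀ i, 0 ≤ u i) → (∑ i, u i = 1) →
      (∀ i, 0 ≤ v i) → (∑ i, v i = 1) →
      ∑ i, Real.log (1 + γ * u i * v i) ≤ ∑ i, Real.log (1 + γ * x i * y i)) :
    ∀ i j : Fin n, i ≠ j → 0 < x i → 0 < x j → 0 < y i → 0 < y j →
      γ ^ 2 * (x i * y i * x j * y j) = 1 ∨ x i = x j := by
  intro i j hij hxi hxj hyi hyj
  -- stationarity in x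
  have h1 : y i * (1 + γ * x j * y j) = y j * (1 + γ * x i * y i) := by
    apply kkt_dir n γ hγ x y hx0 hx1 hy0 _ i j hij hxi hxj
    intro u hu0 hu1
    exact hmax u y hu0 hu1 hy0 hy1
  -- stationarity in y (swap roles of x and y)
  have h2 : x i * (1 + γ * x j * y j) = x j * (1 + γ * x i * y i) := by
    have h2' : x i * (1 + γ * y j * x j) = x j * (1 + γ * y i * x i) := by
      apply kkt_dir n γ hγ y x hy0 hy1 hx0 _ i j hij hyi hyj
      intro v hv0 hv1
      have := hmax x v hx0 hx1 hv0 hv1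
      have e1 : ∑ k, Real.log (1 + γ * v k * x k) = ∑ k, Real.log (1 + γ * x k * v k) :=
        Finset.sum_congr rfl fun k _ => by ring_nf
      have e2 : ∑ k, Real.log (1 + γ * y k * x k) = ∑ k, Real.log (1 + γ * x k * y k) :=
        Finset.sum_congr rfl fun k _ => by ring_nf
      rw [e1, e2]; exact this
    linarith [h2']
  set A := 1 + γ * x i * y i with hA
  set B := 1 + γ * x j * y j with hB
  have hApos : 0 < A := by have := mul_nonneg (mul_nonneg hγ.le (hx0 i)) (hy0 i); simp [hA]; linarith
  have hBpos : 0 < B := by have := mul_nonneg (mul_nonneg hγ.le (hx0 j)) (hy0 j); simp [hB]; linarith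
  by_cases hAB : A = B
  · right
    rw [hAB] at h2
    exact mul_left_cancel₀ hBpos.ne' (by linarith)
  · left
    have h12 : x i * y i * B ^ 2 = x j * y j * A ^ 2 := by linear_combination (x i * B) * h1 + (y j * A) * h2
    have hfac : (A - B) * (A + B - A * B) = 0 := by
      have : γ * (x i * y i) = A - 1 := by rw [hA]; ring
      have : γ * (x j * y j) = B - 1 := by rw [hB]; ring
      nlinarith [h12]
    have hsum : A + B - A * B = 0 := by
      rcases mul_eq_zero.mp hfac with h | h
      · exact absurd (by linarith : A = B) hAB
      · exact h
    have : γ ^ 2 * (x i * y i * x j * y j) = (A - 1) * (B - 1) := by rw [hA, hB]; ring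
    rw [this]
    nlinarith [hsum]
end

section
/- (Symmetry of the optimum.) Let n ≥ 1 be an integer and γ > 0. If (x*, y*) ∈ Δₙ × Δₙ is a global maximizer of f(x,y) = Σᵢ₌₁ⁿ log(1 + γ xᵢ yᵢ) over Δₙ × Δₙ, then x* = y*, i.e., xᵢ* = yᵢ* for every index i. -/
open BigOperators

/-- Symmetry at the optimum: a global maximizer `(x, y)` of
`Σ log (1 + γ xᵢ yᵢ)` over the product of probability simplices has `x = y`. -/
theorem stmt_10 (n : ℕ) (hn : 1 ≤ n) (γ : ℝ) (hγ : 0 < γ)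
    (x y : Fin n → ℝ)
    (hx0 : ∀ i, 0 ≤ x i) (hx1 : ∑ i, x i = 1)
    (hy0 : ∀ i, 0 ≤ y i) (hy1 : ∑ i, y i = 1)
    (hmax : ∀ u v : Fin n → ℝ, (∀ i, 0 ≤ u i) → (∑ i, u i = 1) →
      (∀ i, 0 ≤ v i) → (∑ i, v i = 1) →
      ∑ i, Real.log (1 + γ * u i * v i) ≤ ∑ i, Real.log (1 + γ * x i * y i)) :
    x = y := by
  set z : Fin n → ℝ := fun i => (x i + y i) / 2 with hz
  have hz0 : ∀ i, 0 ≤ z i := fun i => by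
    have := hx0 i; have := hy0 i; simp only [hz]; linarith
  have hz1 : ∑ i, z i = 1 := by
    simp only [hz]
    rw [← Finset.sum_div, Finset.sum_add_distrib, hx1, hy1]
    norm_num
  have hle : ∀ i : Fin n, Real.log (1 + γ * x i * y i) ≤ Real.log (1 + γ * z i * z i) := by
    intro i
    apply Real.log_le_log
    · have := mul_nonneg (mul_nonneg hγ.le (hx0 i)) (hy0 i); linarith
    · have key : x i * y i ≤ z i * z i := by
        have : 0 ≤ (x i - y i)^2 := sq_nonneg _
        simp only [hz]; nlinarith
      nlinarith [key]
  have hsum : ∑ i, Real.log (1 + γ * z i * z i) ≤ ∑ i, Real.log (1 + γ * x i * y i) :=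
    hmax z z hz0 hz1 hz0 hz1
  have hsum' : ∑ i, Real.log (1 + γ * x i * y i) ≤ ∑ i, Real.log (1 + γ * z i * z i) :=
    Finset.sum_le_sum (fun i _ => hle i)
  have heq : ∑ i, Real.log (1 + γ * z i * z i) = ∑ i, Real.log (1 + γ * x i * y i) :=
    le_antisymm hsum hsum'
  have hpt : ∀ i : Fin n, Real.log (1 + γ * x i * y i) = Real.log (1 + γ * z i * z i) := by
    intro i
    have := (Finset.sum_eq_sum_iff_of_le (fun i _ => hle i)).mp heq.symm i (Finset.mem_univ i)
    exact this
  funext i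
  have h1 : (0:ℝ) < 1 + γ * x i * y i := by
    have := mul_nonneg (mul_nonneg hγ.le (hx0 i)) (hy0 i); linarith
  have h2 : (0:ℝ) < 1 + γ * z i * z i := by
    have := mul_nonneg (mul_nonneg hγ.le (hz0 i)) (hz0 i); linarith
  have hexp : 1 + γ * x i * y i = 1 + γ * z i * z i := by
    have := congrArg Real.exp (hpt i)
    rwa [Real.exp_log h1, Real.exp_log h2] at this
  have : x i * y i = z i * z i := by
    have := hexp; nlinarith
  have : (x i - y i)^2 = 0 := by simp only [hz] at this; nlinarith
  have := pow_eq_zero_iff (n := 2) (by norm_num) |>.mp this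
  linarith
end

section
/- (At most two distinct values at the optimum.) Let n ≥ 1 be an integer and γ > 0, and let (x*, y*) ∈ Δₙ × Δₙ be a global maximizer of f(x,y) = Σᵢ₌₁ⁿ log(1 + γ xᵢ yᵢ) over Δₙ × Δₙ. Then the set of distinct nonzero values taken by the entries of x*, namely {xᵢ* : xᵢ* > 0}, has cardinality at most 2. -/
open BigOperators

private lemma sum_upd2 {n : ℕ} (x : Fin n → ℝ) {i j : Fin n} (hij : i ≠ j) (p q : ℝ)
    (F : ℝ → ℝ) :
    ∑ k, F (Function.update (Function.update x i p) j q k)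
      = F p + F q + ∑ k ∈ (Finset.univ \ {j}) \ {i}, F (x k) := by
  have h1 : (fun k => F (Function.update (Function.update x i p) j q k))
      = Function.update (Function.update (fun k => F (x k)) i (F p)) j (F q) := by
    funext k
    rcases eq_or_ne k j with rfl | hkj
    · simp
    · rcases eq_or_ne k i with rfl | hki
      · simp [Function.update_of_ne hkj, Function.update_of_ne hij]
      · simp [Function.update_of_ne hkj, Function.update_of_ne hki]
  rw [h1, Finset.sum_update_of_mem (Finset.mem_univ j),
    Finset.sum_update_of_mem (by simp [hij] : i ∈ Finset.univ \ {j})]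
  ring

private lemma sum_base2 {n : ℕ} (x : Fin n → ℝ) {i j : Fin n} (hij : i ≠ j)
    (F : ℝ → ℝ) :
    ∑ k, F (x k)
      = F (x i) + F (x j) + ∑ k ∈ (Finset.univ \ {j}) \ {i}, F (x k) := by
  have := sum_upd2 x hij (x i) (x j) F
  rw [← this]
  congr 1
  funext k
  rcases eq_or_ne k j with rfl | hkj
  · simp
  · rcases eq_or_ne k i with rfl | hki
    · simp [Function.update_of_ne hkj, Function.update_of_ne hij]
    · simp [Function.update_of_ne hkj, Function.update_of_ne hki]

private lemma pair_cond (γ a b : ℝ) (hγ : 0 < γ) (ha : 0 < a) (hb : 0 < b)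
    (h : ∀ t : ℝ, |t| < min a b →
      (1 + γ * (a + t) * (a + t)) * (1 + γ * (b - t) * (b - t))
        ≤ (1 + γ * a * a) * (1 + γ * b * b)) :
    a = b ∨ γ * a * b = 1 := by
  set F : ℝ → ℝ := fun t => (1 + γ * (a + t) * (a + t)) * (1 + γ * (b - t) * (b - t)) with hF
  have hd1 : HasDerivAt (fun t : ℝ => 1 + γ * (a + t) * (a + t)) (γ * (a + a)) 0 := by
    have hid : HasDerivAt (fun t : ℝ => a + t) 1 0 := (hasDerivAt_id 0).const_add a
    have := ((hid.mul hid).const_mul γ).const_add 1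
    refine (this.congr_deriv (by ring)).congr_of_eventuallyEq (Filter.Eventually.of_forall fun t => ?_)
    simp only [Pi.mul_apply]; ring
  have hd2 : HasDerivAt (fun t : ℝ => 1 + γ * (b - t) * (b - t)) (-(γ * (b + b))) 0 := by
    have hid : HasDerivAt (fun t : ℝ => b - t) (-1) 0 := (hasDerivAt_id 0).const_sub b
    have := ((hid.mul hid).const_mul γ).const_add 1
    refine (this.congr_deriv (by ring)).congr_of_eventuallyEq (Filter.Eventually.of_forall fun t => ?_)
    simp only [Pi.mul_apply]; ring
  have hdF : HasDerivAt F
      (γ * (a + a) * (1 + γ * b * b) + (1 + γ * a * a) * -(γ * (b + b))) 0 := by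
    have := hd1.mul hd2
    refine (this.congr_deriv (by norm_num)).congr_of_eventuallyEq (Filter.Eventually.of_forall fun t => ?_)
    rfl
  have hlocmax : IsLocalMax F 0 := by
    have hε : (0 : ℝ) < min a b := lt_min ha hb
    filter_upwards [Metric.ball_mem_nhds (0 : ℝ) hε] with t ht
    rw [Metric.mem_ball, Real.dist_eq, sub_zero] at ht
    have := h t ht
    simp only [hF]
    calc (1 + γ * (a + t) * (a + t)) * (1 + γ * (b - t) * (b - t))
        ≤ (1 + γ * a * a) * (1 + γ * b * b) := this
      _ = F 0 := by simp [hF]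
  have hzero : γ * (a + a) * (1 + γ * b * b) + (1 + γ * a * a) * -(γ * (b + b)) = 0 := by
    rw [← hdF.deriv]
    exact hlocmax.deriv_eq_zero
  have key : (a - b) * (1 - γ * a * b) = 0 := by
    have hγ' : γ ≠ 0 := ne_of_gt hγ
    field_simp at hzero ⊢
    nlinarith [hzero]
  rcases mul_eq_zero.mp key with h' | h'
  · left; linarith
  · right; linarith

/-- At a global maximizer `(x, y)` of `Σ log (1 + γ xᵢ yᵢ)` over
the product of probability simplices, the entries of `x` take at most two
distinct nonzero values. -/
theorem stmt_11 (n : ℕ) (hn : 1 ≤ n) (γ : ℝ) (hγ : 0 < γ)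
    (x y : Fin n → ℝ)
    (hx0 : ∀ i, 0 ≤ x i) (hx1 : ∑ i, x i = 1)
    (hy0 : ∀ i, 0 ≤ y i) (hy1 : ∑ i, y i = 1)
    (hmax : ∀ u v : Fin n → ℝ, (∀ i, 0 ≤ u i) → (∑ i, u i = 1) →
      (∀ i, 0 ≤ v i) → (∑ i, v i = 1) →
      ∑ i, Real.log (1 + γ * u i * v i) ≤ ∑ i, Real.log (1 + γ * x i * y i)) :
    ((Finset.univ.filter (fun i => 0 < x i)).image x).card ≤ 2 := by
  -- Step 1 : x = y
  have hxy : y = x := by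
    by_contra h
    have h' : ∃ k, x k ≠ y k := by
      by_contra h''
      push_neg at h''
      exact h (funext fun k => (h'' k).symm)
    obtain ⟨k, hk⟩ := h'
    set z : Fin n → ℝ := fun i => (x i + y i) / 2 with hz
    have hz0 : ∀ i, 0 ≤ z i := fun i => by
      have := hx0 i; have := hy0 i; simp only [hz]; linarith
    have hz1 : ∑ i, z i = 1 := by
      simp only [hz]
      rw [← Finset.sum_div, Finset.sum_add_distrib, hx1, hy1]
      norm_num
    have hle : ∀ i ∈ Finset.univ,
        Real.log (1 + γ * x i * y i) ≤ Real.log (1 + γ * z i * z i) := by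
      intro i _
      have hx := hx0 i; have hy := hy0 i
      apply Real.log_le_log (by positivity)
      have : x i * y i ≤ z i * z i := by
        simp only [hz]; nlinarith [sq_nonneg (x i - y i)]
      nlinarith
    have hlt : Real.log (1 + γ * x k * y k) < Real.log (1 + γ * z k * z k) := by
      have hx := hx0 k; have hy := hy0 k
      apply Real.log_lt_log (by positivity)
      have h0 : x k - y k ≠ 0 := sub_ne_zero.mpr hk
      have hne : (x k - y k) ^ 2 > 0 :=
        lt_of_le_of_ne (sq_nonneg _) (Ne.symm (pow_ne_zero 2 h0))
      have : x k * y k < z k * z k := by simp only [hz]; nlinarith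
      nlinarith
    have hsum := Finset.sum_lt_sum hle ⟨k, Finset.mem_univ k, hlt⟩
    exact absurd (hmax z z hz0 hz1 hz0 hz1) (not_le.mpr hsum)
  rw [hxy] at hmax
  clear hy0 hy1 hxy
  -- now hmax compares against ∑ log (1 + γ x x)
  -- Step 2 : pairwise condition
  have pair : ∀ i j : Fin n, i ≠ j → 0 < x i → 0 < x j →
      x i = x j ∨ γ * x i * x j = 1 := by
    intro i j hij hi hj
    apply pair_cond γ (x i) (x j) hγ hi hj
    intro t ht
    rw [abs_lt] at ht
    have htj : t < x j := lt_of_lt_of_le ht.2 (min_le_right _ _)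
    have hti : -(x i) < t := by
      have := min_le_left (x i) (x j)
      linarith [ht.1]
    set p := x i + t with hp
    set q := x j - t with hq
    have hp0 : 0 ≤ p := by simp only [hp]; linarith
    have hq0 : 0 ≤ q := by simp only [hq]; linarith
    set u : Fin n → ℝ := Function.update (Function.update x i p) j q with hu
    have hu0 : ∀ k, 0 ≤ u k := by
      intro k
      rcases eq_or_ne k j with rfl | hkj
      · simpa [hu] using hq0
      · rcases eq_or_ne k i with rfl | hki
        · simpa [hu, Function.update_of_ne hkj, Function.update_of_ne hij] using hp0
        · simpa [hu, Function.update_of_ne hkj, Function.update_of_ne hki] using hx0 k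
    have hu1 : ∑ k, u k = 1 := by
      have := sum_upd2 x hij p q (fun s => s)
      have hb := sum_base2 x hij (fun s => s)
      simp only [hu]
      rw [this]
      simp only [hp, hq]
      rw [hb] at hx1
      linarith
    have hineq := hmax u u hu0 hu1 hu0 hu1
    set F : ℝ → ℝ := fun s => Real.log (1 + γ * s * s) with hFdef
    have hL : ∑ k, Real.log (1 + γ * u k * u k) = ∑ k, F (u k) := rfl
    have hR : ∑ k, Real.log (1 + γ * x k * x k) = ∑ k, F (x k) := rfl
    rw [hL, hR, sum_upd2 x hij p q F, sum_base2 x hij F] at hineq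
    have hkey : F p + F q ≤ F (x i) + F (x j) := by linarith
    -- convert to product inequality
    have hp1 : (0:ℝ) < 1 + γ * p * p := by positivity
    have hq1 : (0:ℝ) < 1 + γ * q * q := by positivity
    have hi1 : (0:ℝ) < 1 + γ * x i * x i := by positivity
    have hj1 : (0:ℝ) < 1 + γ * x j * x j := by positivity
    have hlog : Real.log ((1 + γ * p * p) * (1 + γ * q * q))
        ≤ Real.log ((1 + γ * x i * x i) * (1 + γ * x j * x j)) := by
      rw [Real.log_mul (ne_of_gt hp1) (ne_of_gt hq1),
        Real.log_mul (ne_of_gt hi1) (ne_of_gt hj1)]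
      exact hkey
    have := (Real.log_le_log_iff (by positivity) (by positivity)).mp hlog
    simpa [hp, hq] using this
  -- Step 3 : conclude
  by_contra hcard
  push_neg at hcard
  have h3 : 2 < ((Finset.univ.filter (fun i => 0 < x i)).image x).card := hcard
  rw [Finset.two_lt_card_iff] at h3
  obtain ⟨a, b, c, ha, hb, hc, hab, hac, hbc⟩ := h3
  obtain ⟨i, hi, rfl⟩ := Finset.mem_image.mp ha
  obtain ⟨j, hj, rfl⟩ := Finset.mem_image.mp hb
  obtain ⟨k, hk, rfl⟩ := Finset.mem_image.mp hc
  have hi' : 0 < x i := (Finset.mem_filter.mp hi).2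
  have hj' : 0 < x j := (Finset.mem_filter.mp hj).2
  have hk' : 0 < x k := (Finset.mem_filter.mp hk).2
  have hij : i ≠ j := fun h => hab (by rw [h])
  have hik : i ≠ k := fun h => hac (by rw [h])
  have h1 := pair i j hij hi' hj'
  have h2 := pair i k hik hi' hk'
  rcases h1 with h1 | h1
  · exact hab h1
  rcases h2 with h2 | h2
  · exact hac h2
  apply hbc
  have hxi : γ * x i ≠ 0 := by positivity
  have : γ * x i * x j = γ * x i * x k := by rw [h1, h2]
  exact mul_left_cancel₀ hxi this
end

section
/- Define g : (0,∞) → ℝ by g(x) = x·log(1 + 1/x²). Then g has a unique local maximizer r on (0,∞); this r is also the global maximizer, i.e., g(r) = sup_{x>0} g(x), and r ∈ (0,1). Moreover, g is strictly concave on (0,1] (its second derivative g''(x) = 2x(x² − 1)/(x²(x² + 1)²) is negative for 0 < x < 1) and g is nonincreasing on [1,∞) (g'(x) ≤ 0 for x ≥ 1). -/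
open Real Set

noncomputable def gfun : ℝ → ℝ := fun x => x * Real.log (1 + 1 / x ^ 2)
noncomputable def phi : ℝ → ℝ := fun x => Real.log (1 + 1 / x ^ 2) - 2 / (x ^ 2 + 1)
noncomputable def psi : ℝ → ℝ := fun x => 2 * (x ^ 2 - 1) / (x * (x ^ 2 + 1) ^ 2)

lemma upos {x : ℝ} : (0:ℝ) < 1 + 1 / x ^ 2 := by positivity

lemma hasDeriv_g {x : ℝ} (hx : 0 < x) : HasDerivAt gfun (phi x) x := by
  have hx0 : x ≠ 0 := hx.ne'
  have h0 : HasDerivAt (fun x : ℝ => x ^ 2) (2 * x) x := by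
    simpa using hasDerivAt_pow 2 x
  have hinv : HasDerivAt (fun x : ℝ => (x ^ 2)⁻¹) (-(2 * x) / (x ^ 2) ^ 2) x :=
    h0.inv (pow_ne_zero _ hx0)
  have hu : HasDerivAt (fun x : ℝ => 1 + (x ^ 2)⁻¹) (-(2 * x) / (x ^ 2) ^ 2) x := by
    exact ((hasDerivAt_const x (1:ℝ)).add hinv).congr_deriv (zero_add _)
  have hune : 1 + (x ^ 2)⁻¹ ≠ 0 := by positivity
  have hlog := hu.log hune
  have hprod := (hasDerivAt_id x).mul hlog
  simp only [id_eq] at hprod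
  have hfe : (fun y : ℝ => y * Real.log (1 + (y ^ 2)⁻¹)) = gfun := by
    funext y; simp [gfun, one_div]
  change HasDerivAt (fun y : ℝ => y * Real.log (1 + (y ^ 2)⁻¹)) _ x at hprod; rw [hfe] at hprod
  convert hprod using 1
  have h1 : (x:ℝ) ^ 2 ≠ 0 := pow_ne_zero _ hx0
  have h2 : (x:ℝ) ^ 2 + 1 ≠ 0 := by positivity
  simp only [phi, one_div, id_eq]
  field_simp
  ring

lemma hasDeriv_phi {x : ℝ} (hx : 0 < x) : HasDerivAt phi (psi x) x := by
  have hx0 : x ≠ 0 := hx.ne'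
  have h0 : HasDerivAt (fun x : ℝ => x ^ 2) (2 * x) x := by
    simpa using hasDerivAt_pow 2 x
  have hinv : HasDerivAt (fun x : ℝ => (x ^ 2)⁻¹) (-(2 * x) / (x ^ 2) ^ 2) x :=
    h0.inv (pow_ne_zero _ hx0)
  have hu : HasDerivAt (fun x : ℝ => 1 + (x ^ 2)⁻¹) (-(2 * x) / (x ^ 2) ^ 2) x := by
    exact ((hasDerivAt_const x (1:ℝ)).add hinv).congr_deriv (zero_add _)
  have hune : 1 + (x ^ 2)⁻¹ ≠ 0 := by positivity
  have hlog := hu.log hune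
  have h2 : HasDerivAt (fun x : ℝ => x ^ 2 + 1) (2 * x) x := by
    exact (h0.add (hasDerivAt_const x (1:ℝ))).congr_deriv (add_zero _)
  have h2ne : (x:ℝ) ^ 2 + 1 ≠ 0 := by positivity
  have hdiv : HasDerivAt (fun x : ℝ => 2 / (x ^ 2 + 1))
      ((0 * (x ^ 2 + 1) - 2 * (2 * x)) / (x ^ 2 + 1) ^ 2) x :=
    (hasDerivAt_const x (2:ℝ)).div h2 h2ne
  have hsub := hlog.sub hdiv
  have hfe : (fun x : ℝ => Real.log (1 + (x ^ 2)⁻¹) - 2 / (x ^ 2 + 1)) = phi := by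
    funext y; simp [phi, one_div]
  change HasDerivAt (fun x : ℝ => Real.log (1 + (x ^ 2)⁻¹) - 2 / (x ^ 2 + 1)) _ x at hsub; rw [hfe] at hsub
  convert hsub using 1
  have h1 : (x:ℝ) ^ 2 ≠ 0 := pow_ne_zero _ hx0
  simp only [psi]
  field_simp
  ring

lemma deriv_g_eq {x : ℝ} (hx : 0 < x) : deriv gfun x = phi x := (hasDeriv_g hx).deriv

lemma phi_neg_of_one_le {x : ℝ} (hx : 1 ≤ x) : phi x < 0 := by
  have hx0 : 0 < x := lt_of_lt_of_le one_pos hx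
  have h1 : Real.log (1 + 1 / x ^ 2) < 1 / x ^ 2 := by
    have hgt : (1:ℝ) < 1 + 1 / x ^ 2 := by
      have : (0:ℝ) < 1 / x ^ 2 := by positivity
      linarith
    have := Real.log_lt_sub_one_of_pos (x := 1 + 1 / x ^ 2) upos hgt.ne'
    linarith
  have h2 : 1 / x ^ 2 ≤ 2 / (x ^ 2 + 1) := by
    rw [div_le_div_iff₀ (by positivity) (by positivity)]
    nlinarith
  simp only [phi]; linarith

lemma strictAnti_phi : StrictAntiOn phi (Set.Ioc (0:ℝ) 1) := by
  apply strictAntiOn_of_deriv_neg (convex_Ioc 0 1)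
  · intro x hx
    exact (hasDeriv_phi hx.1).continuousAt.continuousWithinAt
  · intro x hx
    rw [interior_Ioc] at hx
    rw [(hasDeriv_phi hx.1).deriv]
    have hx0 := hx.1
    have h1 : x * (x ^ 2 + 1) ^ 2 > 0 := by positivity
    have h2 : 2 * (x ^ 2 - 1) < 0 := by nlinarith [hx.2]
    exact div_neg_of_neg_of_pos h2 h1

/-- The function `g x = x log (1 + 1/x²)` has a unique local
maximizer `r` on `(0, ∞)`, which is also the global maximizer and lies in
`(0, 1)`; moreover `g` is strictly concave on `(0, 1]` with
`g'' x = 2x(x² − 1)/(x²(x² + 1)²) < 0` for `0 < x < 1`, and `g` is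
nonincreasing on `[1, ∞)`. -/
theorem stmt_12 :
    ∃ r : ℝ, r ∈ Set.Ioo (0 : ℝ) 1 ∧
      IsLocalMaxOn (fun x : ℝ => x * Real.log (1 + 1 / x ^ 2)) (Set.Ioi 0) r ∧
      (∀ x : ℝ, 0 < x →
        x * Real.log (1 + 1 / x ^ 2) ≤ r * Real.log (1 + 1 / r ^ 2)) ∧
      (∀ r' : ℝ, 0 < r' →
        IsLocalMaxOn (fun x : ℝ => x * Real.log (1 + 1 / x ^ 2)) (Set.Ioi 0) r' →
        r' = r) ∧
      StrictConcaveOn ℝ (Set.Ioc (0 : ℝ) 1)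
        (fun x : ℝ => x * Real.log (1 + 1 / x ^ 2)) ∧
      (∀ x : ℝ, 0 < x → x < 1 →
        deriv (deriv (fun x : ℝ => x * Real.log (1 + 1 / x ^ 2))) x
            = 2 * x * (x ^ 2 - 1) / (x ^ 2 * (x ^ 2 + 1) ^ 2) ∧
        deriv (deriv (fun x : ℝ => x * Real.log (1 + 1 / x ^ 2))) x < 0) ∧
      AntitoneOn (fun x : ℝ => x * Real.log (1 + 1 / x ^ 2)) (Set.Ici 1) := by
  have hgfun : (fun x : ℝ => x * Real.log (1 + 1 / x ^ 2)) = gfun := rfl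
  -- pick a small point where phi is positive
  set a : ℝ := Real.exp (-2) with ha
  have ha0 : 0 < a := Real.exp_pos _
  have ha1 : a < 1 := Real.exp_lt_one_iff.mpr (by norm_num)
  have hphia : 0 < phi a := by
    have h1 : Real.log (1 / a ^ 2) ≤ Real.log (1 + 1 / a ^ 2) :=
      Real.log_le_log (by positivity) (by linarith)
    have h2 : Real.log (1 / a ^ 2) = 4 := by
      rw [one_div, Real.log_inv, Real.log_pow, ha, Real.log_exp]
      push_cast; norm_num
    have h3 : 2 / (a ^ 2 + 1) ≤ 2 := by
      rw [div_le_iff₀ (by positivity)]; nlinarith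
    simp only [phi]; linarith
  have hphi1 : phi 1 < 0 := phi_neg_of_one_le le_rfl
  -- intermediate value theorem
  have hcont : ContinuousOn phi (Set.Icc a 1) := fun x hx =>
    (hasDeriv_phi (lt_of_lt_of_le ha0 hx.1)).continuousAt.continuousWithinAt
  have hIVT := intermediate_value_Icc' ha1.le hcont
  have h0mem : (0:ℝ) ∈ Set.Icc (phi 1) (phi a) := ⟨hphi1.le, hphia.le⟩
  obtain ⟨r, hrmem, hr0⟩ := hIVT h0mem
  have hr_pos : 0 < r := lt_of_lt_of_le ha0 hrmem.1
  have hr_lt1 : r < 1 := lt_of_le_of_ne hrmem.2 (by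
    intro h; rw [h] at hr0; linarith)
  have hrIoc : r ∈ Set.Ioc (0:ℝ) 1 := ⟨hr_pos, hrmem.2⟩
  -- sign of phi on (0,1]
  have hphi_pos : ∀ x : ℝ, 0 < x → x < r → 0 < phi x := fun x hx hxr => by
    have := strictAnti_phi ⟨hx, le_trans hxr.le hrmem.2⟩ hrIoc hxr
    rw [hr0] at this; exact this
  have hphi_neg : ∀ x : ℝ, r < x → x ≤ 1 → phi x < 0 := fun x hrx hx1 => by
    have := strictAnti_phi hrIoc ⟨lt_trans hr_pos hrx, hx1⟩ hrx
    rw [hr0] at this; exact this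
  -- monotonicity of g on (0, r]
  have hmono : MonotoneOn gfun (Set.Ioc 0 r) := by
    apply monotoneOn_of_deriv_nonneg (convex_Ioc 0 r)
    · exact fun x hx => (hasDeriv_g hx.1).continuousAt.continuousWithinAt
    · intro x hx
      rw [interior_Ioc] at hx
      exact (hasDeriv_g hx.1).differentiableAt.differentiableWithinAt
    · intro x hx
      rw [interior_Ioc] at hx
      rw [deriv_g_eq hx.1]
      exact (hphi_pos x hx.1 hx.2).le
  -- antitonicity of g on [r, 1]
  have hanti1 : AntitoneOn gfun (Set.Icc r 1) := by
    apply antitoneOn_of_deriv_nonpos (convex_Icc r 1)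
    · exact fun x hx => (hasDeriv_g (lt_of_lt_of_le hr_pos hx.1)).continuousAt.continuousWithinAt
    · intro x hx
      rw [interior_Icc] at hx
      exact (hasDeriv_g (lt_trans hr_pos hx.1)).differentiableAt.differentiableWithinAt
    · intro x hx
      rw [interior_Icc] at hx
      rw [deriv_g_eq (lt_trans hr_pos hx.1)]
      exact (hphi_neg x hx.1 hx.2.le).le
  -- antitonicity of g on [1, ∞)
  have hanti2 : AntitoneOn gfun (Set.Ici 1) := by
    apply antitoneOn_of_deriv_nonpos (convex_Ici 1)
    · exact fun x hx => (hasDeriv_g (lt_of_lt_of_le one_pos hx)).continuousAt.continuousWithinAt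
    · intro x hx
      rw [interior_Ici] at hx
      exact (hasDeriv_g (lt_trans one_pos hx)).differentiableAt.differentiableWithinAt
    · intro x hx
      rw [interior_Ici] at hx
      rw [deriv_g_eq (lt_trans one_pos hx)]
      exact (phi_neg_of_one_le hx.le).le
  -- global max
  have hglobal : ∀ x : ℝ, 0 < x → gfun x ≤ gfun r := by
    intro x hx
    rcases le_total x r with h | h
    · exact hmono ⟨hx, h⟩ ⟨hr_pos, le_rfl⟩ h
    · rcases le_total x 1 with h1 | h1
      · exact hanti1 ⟨le_rfl, hrmem.2⟩ ⟨h, h1⟩ h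
      · calc gfun x ≤ gfun 1 := hanti2 (le_refl (1:ℝ)) h1 h1
          _ ≤ gfun r := hanti1 ⟨le_rfl, hrmem.2⟩ ⟨hrmem.2, le_rfl⟩ hrmem.2
  refine ⟨r, ⟨hr_pos, hr_lt1⟩, ?_, ?_, ?_, ?_, ?_, ?_⟩
  · -- local max
    rw [hgfun]
    filter_upwards [self_mem_nhdsWithin] with x hx using hglobal x hx
  · exact fun x hx => hglobal x hx
  · -- uniqueness
    intro r' hr' hmax
    have hIsMax : IsLocalMax gfun r' := hmax.isLocalMax (Ioi_mem_nhds hr')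
    have hderiv0 : deriv gfun r' = 0 := hIsMax.deriv_eq_zero
    rw [deriv_g_eq hr'] at hderiv0
    by_cases h1 : 1 ≤ r'
    · exact absurd hderiv0 (phi_neg_of_one_le h1).ne
    · push_neg at h1
      exact strictAnti_phi.injOn ⟨hr', h1.le⟩ hrIoc (by rw [hderiv0, hr0])
  · -- strict concavity
    rw [hgfun]
    apply strictConcaveOn_of_deriv2_neg (convex_Ioc 0 1)
    · exact fun x hx => (hasDeriv_g hx.1).continuousAt.continuousWithinAt
    · intro x hx
      rw [interior_Ioc] at hx
      have hev : deriv gfun =ᶠ[nhds x] phi := by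
        filter_upwards [Ioi_mem_nhds hx.1] with y hy
        exact deriv_g_eq hy
      have : deriv (deriv gfun) x = psi x := by
        rw [hev.deriv_eq, (hasDeriv_phi hx.1).deriv]
      simp only [Function.iterate_succ, Function.iterate_zero, Function.comp_apply, id_eq]
      rw [this]
      have hx' : 0 < x := hx.1
      have h1 : x * (x ^ 2 + 1) ^ 2 > 0 := by positivity
      exact div_neg_of_neg_of_pos (by nlinarith [hx.1, hx.2]) h1
  · -- second derivative formula
    intro x hx0 hx1
    rw [hgfun]
    have hev : deriv gfun =ᶠ[nhds x] phi := by
      filter_upwards [Ioi_mem_nhds hx0] with y hy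
      exact deriv_g_eq hy
    have heq : deriv (deriv gfun) x = psi x := by
      rw [hev.deriv_eq, (hasDeriv_phi hx0).deriv]
    constructor
    · rw [heq]
      simp only [psi]
      have hx0' : x ≠ 0 := hx0.ne'
      field_simp
    · rw [heq]
      have h1 : x * (x ^ 2 + 1) ^ 2 > 0 := by positivity
      exact div_neg_of_neg_of_pos (by nlinarith) h1
  · rw [hgfun]; exact hanti2
end

section
/- Define g : (0,∞) → ℝ by g(x) = x·log(1 + 1/x²). Then for every x ≥ 1 one has g(x/2) ≥ g(3x/4) ≥ g(x), and g is strictly decreasing on the interval [3x/4, x] (i.e., for 3x/4 ≤ u < v ≤ x, g(u) > g(v)). -/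
open Real Set

/-- The function `g x = x log (1 + 1/x²)` from the generalized water-filling
analysis. -/
noncomputable def gWF (x : ℝ) : ℝ := x * Real.log (1 + 1 / x ^ 2)

noncomputable def gWF' (t : ℝ) : ℝ := Real.log (1 + 1 / t ^ 2) - 2 / (t ^ 2 + 1)

lemma log_le_half_sub (y : ℝ) (hy : 1 ≤ y) : Real.log y ≤ (y - 1 / y) / 2 := by
  set φ : ℝ → ℝ := fun t => (t - 1 / t) / 2 - Real.log t with hφ
  have hder : ∀ t : ℝ, 0 < t → HasDerivAt φ ((t - 1) ^ 2 / (2 * t ^ 2)) t := by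
    intro t ht
    have h1 : HasDerivAt (fun s : ℝ => (s - 1 / s) / 2 - Real.log s)
        ((1 - (-1 / t ^ 2)) / 2 - 1 / t) t := by
      have := ((hasDerivAt_id t).sub ((hasDerivAt_id t).inv ht.ne')).div_const 2
      simp only [one_div] at this ⊢
      have hlog := Real.hasDerivAt_log ht.ne'
      simpa [neg_div] using this.fun_sub hlog
    convert h1 using 1
    field_simp
    ring
  have hmono : MonotoneOn φ (Set.Ici 1) := by
    apply monotoneOn_of_deriv_nonneg (convex_Ici 1)
    · intro t ht
      exact (hder t (lt_of_lt_of_le one_pos ht)).continuousAt.continuousWithinAt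
    · intro t ht
      rw [interior_Ici] at ht
      exact (hder t (lt_trans one_pos ht)).differentiableAt.differentiableWithinAt
    · intro t ht
      rw [interior_Ici] at ht
      rw [(hder t (lt_trans one_pos ht)).deriv]
      positivity
  have h0 : φ 1 = 0 := by simp [hφ]
  have := hmono (Set.self_mem_Ici) (Set.mem_Ici.mpr hy) hy
  rw [h0] at this
  simpa [hφ, sub_nonneg] using this

lemma hasDerivAt_inner (t : ℝ) (ht : 0 < t) :
    HasDerivAt (fun s : ℝ => 1 + 1 / s ^ 2) (-(2 * t) / (t ^ 2) ^ 2) t := by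
  have h := ((hasDerivAt_pow 2 t).inv (by positivity)).const_add 1
  simpa [one_div] using h

lemma hasDerivAt_gWF (t : ℝ) (ht : 0 < t) : HasDerivAt gWF (gWF' t) t := by
  have hlog : HasDerivAt (fun s : ℝ => Real.log (1 + 1 / s ^ 2))
      ((-(2 * t) / (t ^ 2) ^ 2) / (1 + 1 / t ^ 2)) t :=
    (hasDerivAt_inner t ht).log (by positivity)
  have h := (hasDerivAt_id t).fun_mul hlog
  have : HasDerivAt gWF (1 * Real.log (1 + 1 / t ^ 2) +
      t * ((-(2 * t) / (t ^ 2) ^ 2) / (1 + 1 / t ^ 2))) t := by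
    unfold gWF
    simpa using h
  convert this using 1
  have h2 : (0:ℝ) < t ^ 2 + 1 := by positivity
  unfold gWF'
  field_simp
  ring

lemma hasDerivAt_gWF' (t : ℝ) (ht : 0 < t) :
    HasDerivAt gWF' ((2 * t ^ 2 - 2) / (t * (t ^ 2 + 1) ^ 2)) t := by
  have hlog : HasDerivAt (fun s : ℝ => Real.log (1 + 1 / s ^ 2))
      ((-(2 * t) / (t ^ 2) ^ 2) / (1 + 1 / t ^ 2)) t :=
    (hasDerivAt_inner t ht).log (by positivity)
  have hden : HasDerivAt (fun s : ℝ => s ^ 2 + 1) (2 * t) t := by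
    simpa using (hasDerivAt_pow 2 t).add_const 1
  have hfrac : HasDerivAt (fun s : ℝ => 2 / (s ^ 2 + 1))
      (-(2 * (2 * t)) / (t ^ 2 + 1) ^ 2) t := by
    have h2 := (hden.inv (show (t:ℝ) ^ 2 + 1 ≠ 0 by positivity)).const_mul 2
    simp only [div_eq_mul_inv]
    refine h2.congr_deriv ?_
    field_simp
  have h := hlog.sub hfrac
  refine h.congr_deriv ?_
  have h2 : (0:ℝ) < t ^ 2 + 1 := by positivity
  field_simp
  ring

lemma gWF'_neg (t : ℝ) (ht : 3 / 4 ≤ t) : gWF' t < 0 := by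
  have ht0 : (0:ℝ) < t := by linarith
  set y : ℝ := Real.sqrt (1 + 1 / t ^ 2) with hy
  have hy2 : y ^ 2 = 1 + 1 / t ^ 2 := Real.sq_sqrt (by positivity)
  have hy0 : 0 ≤ y := Real.sqrt_nonneg _
  have hy1 : 1 ≤ y := by
    have hp : (0:ℝ) < 1 / t ^ 2 := by positivity
    nlinarith [hy2]
  have hyp : 0 < y := by linarith
  have hinv : 1 / t ^ 2 ≤ 16 / 9 := by
    rw [div_le_div_iff₀ (by positivity) (by norm_num)]
    nlinarith
  have hylt2 : y < 2 := by
    have hsq : y ^ 2 < 4 := by rw [hy2]; linarith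
    nlinarith [hsq, hyp]
  have hlogle : Real.log (1 + 1 / t ^ 2) ≤ y - 1 / y := by
    have h1 : Real.log (1 + 1 / t ^ 2) = 2 * Real.log y := by
      rw [← hy2]
      have := Real.log_pow (n := 2) (x := y)
      push_cast at this
      linarith
    rw [h1]
    have := log_le_half_sub y hy1
    linarith
  have e2 : t ^ 2 + 1 = t ^ 2 * y ^ 2 := by
    rw [hy2]; field_simp
  have key : y - 1 / y < 2 / (t ^ 2 + 1) := by
    have e1 : y - 1 / y = 1 / (t ^ 2 * y) := by
      rw [eq_div_iff (by positivity)]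
      field_simp
      nlinarith [hy2]
    rw [e1, e2, div_lt_div_iff₀ (by positivity) (by positivity)]
    nlinarith [sq_nonneg t]
  unfold gWF'
  linarith

lemma strictAnti34 : StrictAntiOn gWF (Set.Ici (3/4 : ℝ)) := by
  apply strictAntiOn_of_deriv_neg (convex_Ici _)
  · intro t ht
    have : (0:ℝ) < t := lt_of_lt_of_le (by norm_num) ht
    exact (hasDerivAt_gWF t this).continuousAt.continuousWithinAt
  · intro t ht
    rw [interior_Ici] at ht
    rw [(hasDerivAt_gWF t (lt_trans (by norm_num) ht)).deriv]
    exact gWF'_neg t ht.le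

lemma concaveMid : ConcaveOn ℝ (Set.Icc (1/2 : ℝ) (3/4)) gWF := by
  have : StrictConcaveOn ℝ (Set.Icc (1/2 : ℝ) (3/4)) gWF := by
    apply strictConcaveOn_of_deriv2_neg (convex_Icc _ _)
    · intro t ht
      have : (0:ℝ) < t := lt_of_lt_of_le (by norm_num) ht.1
      exact (hasDerivAt_gWF t this).continuousAt.continuousWithinAt
    · intro z hz
      rw [interior_Icc] at hz
      have hz0 : (0:ℝ) < z := lt_trans (by norm_num) hz.1
      have heq : deriv gWF =ᶠ[nhds z] gWF' := by
        filter_upwards [Ioi_mem_nhds hz0] with t ht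
        exact (hasDerivAt_gWF t ht).deriv
      have h2 : deriv^[2] gWF z = deriv (deriv gWF) z := rfl
      rw [h2, heq.deriv_eq, (hasDerivAt_gWF' z hz0).deriv]
      apply div_neg_of_neg_of_pos
      · nlinarith [hz.2]
      · positivity
  exact this.concaveOn

lemma gHalf_ge : gWF (3/4) ≤ gWF (1/2) := by
  have e1 : gWF (1/2 : ℝ) = 1/2 * Real.log 5 := by
    unfold gWF; norm_num
  have e2 : gWF (3/4 : ℝ) = 3/4 * Real.log (25/9) := by
    unfold gWF; norm_num
  rw [e1, e2]
  have h := Real.log_le_log (show (0:ℝ) < (25/9)^(3:ℕ) by norm_num)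
    (show ((25/9 : ℝ))^(3:ℕ) ≤ (5:ℝ)^(2:ℕ) by norm_num)
  rw [Real.log_pow, Real.log_pow] at h
  push_cast at h
  linarith

/-- For every `x ≥ 1`, `g(x/2) ≥ g(3x/4) ≥ g(x)`, and `g` is
strictly decreasing on the interval `[3x/4, x]`. -/
theorem stmt_13 (x : ℝ) (hx : 1 ≤ x) :
    gWF (x / 2) ≥ gWF (3 * x / 4) ∧ gWF (3 * x / 4) ≥ gWF x ∧
    StrictAntiOn gWF (Set.Icc (3 * x / 4) x) := by
  have h34 : (3:ℝ)/4 ≤ 3 * x / 4 := by linarith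
  have hxI : x ∈ Set.Ici (3/4 : ℝ) := by simp only [Set.mem_Ici]; linarith
  have h34I : 3 * x / 4 ∈ Set.Ici (3/4 : ℝ) := h34
  refine ⟨?_, ?_, ?_⟩
  · by_cases hc : 3/2 ≤ x
    · have h1 : x / 2 ∈ Set.Ici (3/4 : ℝ) := by simp only [Set.mem_Ici]; linarith
      exact (strictAnti34 h1 h34I (by linarith)).le
    · push_neg at hc
      have hmem : x / 2 ∈ Set.Icc (1/2 : ℝ) (3/4) := by
        constructor <;> [linarith; linarith]
      have hseg : x / 2 ∈ segment ℝ (1/2 : ℝ) (3/4) := by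
        rw [segment_eq_Icc (by norm_num : (1/2:ℝ) ≤ 3/4)]
        exact hmem
      have hA := concaveMid.ge_on_segment
        (Set.mem_Icc.mpr ⟨le_refl _, by norm_num⟩)
        (Set.mem_Icc.mpr ⟨by norm_num, le_refl _⟩) hseg
      rw [min_eq_right gHalf_ge] at hA
      have hB : gWF (3 * x / 4) ≤ gWF (3/4 : ℝ) :=
        strictAnti34.antitoneOn Set.self_mem_Ici h34I h34
      linarith
  · exact (strictAnti34 h34I hxI (by linarith)).le
  · exact strictAnti34.mono fun t ht => le_trans h34 ht.1
end

section
/- (Critical points of the two-level allocation.) Let γ > 0 and let n₁, n₂ be positive real numbers. Define f : [0,1] → ℝ by f(λ) = n₁·log(1 + γλ²/n₁²) + n₂·log(1 + γ(1−λ)²/n₂²). If λ ∈ (0,1) satisfies f′(λ) = 0, then either λ = n₁/(n₁ + n₂), or else γ ≥ 4n₁n₂ and λ = (1 + √(1 − 4n₁n₂/γ))/2 or λ = (1 − √(1 − 4n₁n₂/γ))/2. Consequently, every maximizer of f on [0,1] lies in the set {0, 1, n₁/(n₁+n₂)} ∪ {(1 ± √(1 − 4n₁n₂/γ))/2}. 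-/
lemma aux_hasDerivAt (γ n₁ n₂ : ℝ) (hγ : 0 < γ) (h₁ : 0 < n₁) (h₂ : 0 < n₂) (lam : ℝ) :
    HasDerivAt (fun lam : ℝ =>
      n₁ * Real.log (1 + γ * lam ^ 2 / n₁ ^ 2)
        + n₂ * Real.log (1 + γ * (1 - lam) ^ 2 / n₂ ^ 2))
      (n₁ * ((1 + γ * lam ^ 2 / n₁ ^ 2)⁻¹ * (γ * (2 * lam ^ 1) / n₁ ^ 2))
        + n₂ * ((1 + γ * (1 - lam) ^ 2 / n₂ ^ 2)⁻¹ *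
            (γ * (↑2 * (1 - lam) ^ 1 * (-1)) / n₂ ^ 2))) lam := by
  have p1 : (0:ℝ) < 1 + γ * lam ^ 2 / n₁ ^ 2 := by positivity
  have p2 : (0:ℝ) < 1 + γ * (1 - lam) ^ 2 / n₂ ^ 2 := by positivity
  have d1 : HasDerivAt (fun l : ℝ => 1 + γ * l ^ 2 / n₁ ^ 2)
      (γ * (2 * lam ^ 1) / n₁ ^ 2) lam :=
    (((hasDerivAt_pow 2 lam).const_mul γ).div_const _).const_add 1
  have d2 : HasDerivAt (fun l : ℝ => 1 + γ * (1 - l) ^ 2 / n₂ ^ 2)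
      (γ * (↑2 * (1 - lam) ^ 1 * (-1)) / n₂ ^ 2) lam := by
    have : HasDerivAt (fun l : ℝ => (1 - l)) (-1) lam := (hasDerivAt_id lam).const_sub 1
    exact (((this.pow 2).const_mul γ).div_const _).const_add 1
  have l1 := ((Real.hasDerivAt_log p1.ne').comp lam d1).const_mul n₁
  have l2 := ((Real.hasDerivAt_log p2.ne').comp lam d2).const_mul n₂
  have := l1.add l2
  simpa [Function.comp, one_div, mul_comm, Pi.add_def] using this

/-- Critical points of the two-level allocation objective
`f λ = n₁ log (1 + γλ²/n₁²) + n₂ log (1 + γ(1−λ)²/n₂²)`: every interior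
critical point is `n₁/(n₁+n₂)` or (when `γ ≥ 4n₁n₂`) one of
`(1 ± √(1 − 4n₁n₂/γ))/2`; hence every maximizer on `[0,1]` lies in
`{0, 1, n₁/(n₁+n₂), (1 ± √(1 − 4n₁n₂/γ))/2}`. -/
theorem stmt_16 (γ : ℝ) (hγ : 0 < γ) (n₁ n₂ : ℝ) (h₁ : 0 < n₁) (h₂ : 0 < n₂) :
    let f : ℝ → ℝ := fun lam =>
      n₁ * Real.log (1 + γ * lam ^ 2 / n₁ ^ 2)
        + n₂ * Real.log (1 + γ * (1 - lam) ^ 2 / n₂ ^ 2)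
    (∀ lam ∈ Set.Ioo (0 : ℝ) 1, deriv f lam = 0 →
      lam = n₁ / (n₁ + n₂) ∨
      (4 * n₁ * n₂ ≤ γ ∧
        (lam = (1 + Real.sqrt (1 - 4 * n₁ * n₂ / γ)) / 2 ∨
         lam = (1 - Real.sqrt (1 - 4 * n₁ * n₂ / γ)) / 2))) ∧
    ∀ lam ∈ Set.Icc (0 : ℝ) 1, (∀ μ ∈ Set.Icc (0 : ℝ) 1, f μ ≤ f lam) →
      lam = 0 ∨ lam = 1 ∨ lam = n₁ / (n₁ + n₂) ∨
      lam = (1 + Real.sqrt (1 - 4 * n₁ * n₂ / γ)) / 2 ∨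
      lam = (1 - Real.sqrt (1 - 4 * n₁ * n₂ / γ)) / 2 := by
  intro f
  have key : ∀ lam ∈ Set.Ioo (0 : ℝ) 1, deriv f lam = 0 →
      lam = n₁ / (n₁ + n₂) ∨
      (4 * n₁ * n₂ ≤ γ ∧
        (lam = (1 + Real.sqrt (1 - 4 * n₁ * n₂ / γ)) / 2 ∨
         lam = (1 - Real.sqrt (1 - 4 * n₁ * n₂ / γ)) / 2)) := by
    intro lam hlam hd
    obtain ⟨hl0, hl1⟩ := hlam
    have hD := (aux_hasDerivAt γ n₁ n₂ hγ h₁ h₂ lam).deriv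
    rw [hd] at hD
    have p1 : (0:ℝ) < 1 + γ * lam ^ 2 / n₁ ^ 2 := by positivity
    have p2 : (0:ℝ) < 1 + γ * (1 - lam) ^ 2 / n₂ ^ 2 := by positivity
    -- polynomial identity from derivative = 0
    have hpoly : (lam * (n₁ + n₂) - n₁) * (n₁ * n₂ - γ * lam * (1 - lam)) = 0 := by
      have h := hD.symm
      field_simp at h
      have h2 : 2 * γ * n₁ ^ 2 * n₂ ^ 2 *
          ((lam * (n₁ + n₂) - n₁) * (n₁ * n₂ - γ * lam * (1 - lam))) = 0 := by
        linear_combination (n₁ ^ 2 * n₂ ^ 2) * h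
      have hpos : (0:ℝ) < 2 * γ * n₁ ^ 2 * n₂ ^ 2 := by positivity
      exact (mul_eq_zero.mp h2).resolve_left hpos.ne'
    rcases mul_eq_zero.mp hpoly with h | h
    · left
      have hn : n₁ + n₂ ≠ 0 := by positivity
      field_simp
      linarith
    · right
      have hq : γ * lam * (1 - lam) = n₁ * n₂ := by linarith
      have hs : 1 - 4 * n₁ * n₂ / γ = (2 * lam - 1) ^ 2 := by
        field_simp
        nlinarith [hq]
      constructor
      · have : (0:ℝ) ≤ 1 - 4 * n₁ * n₂ / γ := by rw [hs]; positivity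
        rw [sub_nonneg, div_le_one hγ] at this
        linarith
      · have hsq : Real.sqrt (1 - 4 * n₁ * n₂ / γ) = |2 * lam - 1| := by
          rw [hs, Real.sqrt_sq_eq_abs]
        rcases le_or_gt (1/2 : ℝ) lam with h' | h'
        · left
          rw [hsq, abs_of_nonneg (by linarith)]; ring
        · right
          rw [hsq, abs_of_neg (by linarith)]; ring
  refine ⟨key, ?_⟩
  intro lam hlam hmax
  rcases eq_or_lt_of_le hlam.1 with h0 | h0
  · exact Or.inl h0.symm
  rcases eq_or_lt_of_le hlam.2 with h1 | h1
  · exact Or.inr (Or.inl h1)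
  have hmem : lam ∈ Set.Ioo (0:ℝ) 1 := ⟨h0, h1⟩
  have hloc : IsLocalMax f lam := by
    filter_upwards [Ioo_mem_nhds h0 h1] with x hx
    exact hmax x ⟨hx.1.le, hx.2.le⟩
  have hd : deriv f lam = 0 := hloc.deriv_eq_zero
  rcases key lam hmem hd with h | ⟨_, h | h⟩
  · exact Or.inr (Or.inr (Or.inl h))
  · exact Or.inr (Or.inr (Or.inr (Or.inl h)))
  · exact Or.inr (Or.inr (Or.inr (Or.inr h)))
end
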